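/- Let λ ≠ 0. The critical points of the polynomial function f(x,y,z) = x³ − xz² − y²z + λx² are exactly the two points (0,0,0) and (−2λ/3, 0, 0); the critical value f(−2λ/3, 0, 0) equals 4λ³/27; the Hessian matrix of f at (0,0,0) equals diag(2λ, 0, 0) (rank 1), and the Hessian matrix at (−2λ/3, 0, 0) equals diag(−2λ, 0, 4λ/3) (rank 2). -/

import Mathlib

open MvPolynomial Matrix

/-- The Hessian matrix of a polynomial in three real variables at a point. -/
noncomputable def hess3 (f : MvPolynomial (Fin 3) ℝ) (p : Fin 3 → ℝ) :
    Matrix (Fin 3) (Fin 3) ℝ :=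
  Matrix.of fun i j => eval p (pderiv i (pderiv j f))

/-- A point of ℝ³ is a critical point of a polynomial in three variables if all three
partial derivatives vanish there. -/
def IsCriticalPt3 (f : MvPolynomial (Fin 3) ℝ) (p : Fin 3 → ℝ) : Prop :=
  ∀ i, eval p (pderiv i f) = 0

/-- The polynomial f(x,y,z) = x³ − xz² − y²z + λx². -/
noncomputable def fD5A3 (lam : ℝ) : MvPolynomial (Fin 3) ℝ :=
  X 0 ^ 3 - X 0 * X 2 ^ 2 - X 1 ^ 2 * X 2 + C lam * X 0 ^ 2

lemma pderiv_ofNat' (i : Fin 3) (n : ℕ) [n.AtLeastTwo] :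
    pderiv i (no_index (OfNat.ofNat n) : MvPolynomial (Fin 3) ℝ) = 0 := by
  rw [← map_ofNat (C : ℝ →+* MvPolynomial (Fin 3) ℝ) n, pderiv_C]

lemma pdf0 (lam : ℝ) : pderiv 0 (fD5A3 lam) =
    3 * X 0 ^ 2 - X 2 ^ 2 + 2 * C lam * X 0 := by
  simp [fD5A3]; ring

lemma pdf1 (lam : ℝ) : pderiv 1 (fD5A3 lam) = - (2 * X 1 * X 2) := by
  simp [fD5A3]; ring

lemma pdf2 (lam : ℝ) : pderiv 2 (fD5A3 lam) = - (2 * X 0 * X 2) - X 1 ^ 2 := by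
  simp [fD5A3]; ring

lemma pd0 (lam : ℝ) (p : Fin 3 → ℝ) :
    eval p (pderiv 0 (fD5A3 lam)) = 3 * p 0 ^ 2 - p 2 ^ 2 + 2 * lam * p 0 := by
  rw [pdf0]; simp

lemma pd1 (lam : ℝ) (p : Fin 3 → ℝ) :
    eval p (pderiv 1 (fD5A3 lam)) = -2 * p 1 * p 2 := by
  rw [pdf1]; simp

lemma pd2 (lam : ℝ) (p : Fin 3 → ℝ) :
    eval p (pderiv 2 (fD5A3 lam)) = -2 * p 0 * p 2 - p 1 ^ 2 := by
  rw [pdf2]; simp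

lemma hess3_fD5A3 (lam : ℝ) (p : Fin 3 → ℝ) :
    hess3 (fD5A3 lam) p =
      !![6 * p 0 + 2 * lam, 0, -2 * p 2;
         0, -2 * p 2, -2 * p 1;
         -2 * p 2, -2 * p 1, -2 * p 0] := by
  ext i j
  fin_cases j <;> fin_cases i <;>
    simp [hess3, pdf0, pdf1, pdf2, pderiv_ofNat'] <;> ring

/-- For λ ≠ 0, the critical points of x³ − xz² − y²z + λx² are exactly (0,0,0) and
(−2λ/3, 0, 0); the critical value at the latter is 4λ³/27; the Hessian at the origin
is diag(2λ,0,0) of rank 1, and the Hessian at (−2λ/3,0,0) is diag(−2λ,0,4λ/3) of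
rank 2. -/
theorem critical_points_fD5A3 (lam : ℝ) (hlam : lam ≠ 0) :
    (∀ p : Fin 3 → ℝ, IsCriticalPt3 (fD5A3 lam) p ↔
      p = ![0, 0, 0] ∨ p = ![-2 * lam / 3, 0, 0]) ∧
    eval ![-2 * lam / 3, 0, 0] (fD5A3 lam) = 4 * lam ^ 3 / 27 ∧
    hess3 (fD5A3 lam) ![0, 0, 0] = Matrix.diagonal ![2 * lam, 0, 0] ∧
    (hess3 (fD5A3 lam) ![0, 0, 0]).rank = 1 ∧
    hess3 (fD5A3 lam) ![-2 * lam / 3, 0, 0] =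
      Matrix.diagonal ![-2 * lam, 0, 4 * lam / 3] ∧
    (hess3 (fD5A3 lam) ![-2 * lam / 3, 0, 0]).rank = 2 := by
  classical
  have hH0 : hess3 (fD5A3 lam) ![0, 0, 0] = Matrix.diagonal ![2 * lam, 0, 0] := by
    rw [hess3_fD5A3]
    ext i j
    fin_cases i <;> fin_cases j <;> simp [Matrix.diagonal, Matrix.vecHead, Matrix.vecTail] <;> ring
  have hH1 : hess3 (fD5A3 lam) ![-2 * lam / 3, 0, 0] =
      Matrix.diagonal ![-2 * lam, 0, 4 * lam / 3] := by
    rw [hess3_fD5A3]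
    ext i j
    fin_cases i <;> fin_cases j <;> simp [Matrix.diagonal, Matrix.vecHead, Matrix.vecTail] <;> ring
  refine ⟨?_, ?_, hH0, ?_, hH1, ?_⟩
  · intro p
    constructor
    · intro h
      have h0 := h 0; have h1 := h 1; have h2 := h 2
      rw [pd0] at h0; rw [pd1] at h1; rw [pd2] at h2
      have hyz : p 1 = 0 ∨ p 2 = 0 := by
        rcases mul_eq_zero.1 h1 with h | h
        · exact Or.inl (by rcases mul_eq_zero.1 h with h' | h' <;> [linarith; exact h'])
        · exact Or.inr h
      have hz : p 2 = 0 := by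
        rcases hyz with hy | hz
        · by_contra hz
          have hx : p 0 = 0 := by
            rw [hy] at h2
            have h2' : -2 * p 0 * p 2 = 0 := by linarith
            rcases mul_eq_zero.1 h2' with h' | h'
            · rcases mul_eq_zero.1 h' with h'' | h'' <;> [linarith; exact h'']
            · exact absurd h' hz
          rw [hx] at h0
          have : p 2 ^ 2 = 0 := by linarith
          exact hz (pow_eq_zero_iff (n := 2) (by norm_num) |>.1 this)
        · exact hz
      have hy : p 1 = 0 := by
        rw [hz] at h2
        have : p 1 ^ 2 = 0 := by linarith
        exact pow_eq_zero_iff (n := 2) (by norm_num) |>.1 this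
      rw [hz] at h0
      have hx : p 0 * (3 * p 0 + 2 * lam) = 0 := by nlinarith [h0]
      rcases mul_eq_zero.1 hx with hx0 | hx0
      · left; funext i; fin_cases i <;> simp [hx0, hy, hz]
      · right; funext i; fin_cases i <;> simp [hy, hz] <;> linarith
    · have hfin : ∀ i : Fin 3, i = 0 ∨ i = 1 ∨ i = 2 := by decide
      rintro (rfl | rfl) i <;> rcases hfin i with rfl | rfl | rfl <;>
        simp only [pd0, pd1, pd2] <;>
        norm_num [Matrix.vecHead, Matrix.vecTail, Matrix.cons_val_two] <;> ring
  · simp [fD5A3]; ring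
  · rw [hH0, Matrix.rank_diagonal, Fintype.card_eq_one_iff]
    refine ⟨⟨0, by simpa using mul_ne_zero two_ne_zero hlam⟩, ?_⟩
    rintro ⟨i, hi⟩
    fin_cases i <;> first | rfl | exact absurd rfl hi
  · rw [hH1, Matrix.rank_diagonal]
    have he : ∀ i : Fin 3, (![-2 * lam, 0, 4 * lam / 3] i ≠ 0) ↔ i ≠ 1 := by
      intro i; fin_cases i <;> simp [hlam, div_eq_zero_iff]
    rw [Fintype.card_congr (Equiv.subtypeEquivRight he)]
    rw [Fintype.card_subtype]
    decide
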